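/- For all real numbers α, β ≥ 0 and p ∈ (1,2], the quantity γ_p(α,β) := pα(α-β) - α^{2-p}(α^p - β^p) is nonnegative. -/

import Mathlib

/-- `γ_p(α,β) = pα(α-β) - α^(2-p)(α^p - β^p)`, with real powers (`0^t = 0` for `t > 0`). -/
noncomputable def gammaP (p α β : ℝ) : ℝ :=
  p * α * (α - β) - α ^ (2 - p) * (α ^ p - β ^ p)

theorem gammaP_nonneg (p α β : ℝ) (hα : 0 ≤ α) (hβ : 0 ≤ β)
    (hp1 : 1 < p) (hp2 : p ≤ 2) :
    0 ≤ gammaP p α β := by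
  unfold gammaP
  rcases hα.eq_or_lt with rfl | hα
  · rcases hp2.eq_or_lt with rfl | hp2'
    · rw [Real.zero_rpow (by norm_num : (2:ℝ) ≠ 0)]
      simp
      positivity
    · rw [Real.zero_rpow (by linarith : 2 - p ≠ 0)]
      simp
  · -- α > 0 case
    have hA : (0:ℝ) < α ^ p := Real.rpow_pos_of_pos hα p
    have hC : (0:ℝ) < α ^ (2 - p) := Real.rpow_pos_of_pos hα (2 - p)
    have hCA : α ^ (2 - p) * α ^ p = α ^ 2 := by
      rw [← Real.rpow_natCast α 2, ← Real.rpow_add hα]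
      norm_num
    have hs : (-1:ℝ) ≤ β / α - 1 := by
      have : 0 ≤ β / α := div_nonneg hβ hα.le
      linarith
    have key : 1 + p * (β / α - 1) ≤ (β / α) ^ p := by
      have := one_add_mul_self_le_rpow_one_add hs hp1.le
      simpa using this
    have hdiv : (β / α) ^ p = β ^ p / α ^ p := Real.div_rpow hβ hα.le p
    rw [hdiv] at key
    have h2 : α ^ 2 * (1 + p * (β / α - 1)) ≤ α ^ 2 * (β ^ p / α ^ p) :=
      mul_le_mul_of_nonneg_left key (sq_nonneg α)
    have hCB : α ^ 2 * (β ^ p / α ^ p) = α ^ (2 - p) * β ^ p := by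
      rw [← hCA]
      field_simp
    rw [hCB] at h2
    have hαβ : α ^ 2 * (1 + p * (β / α - 1)) = α ^ 2 + p * (α * β - α ^ 2) := by
      field_simp
    rw [hαβ] at h2
    nlinarith [hCA]
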